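/- Suppose the pair (E, F) has the weak maximizing property with F ≠ {0}. Then for every bounded linear operator T : E → F and every ε > 0 there exists a rank-one bounded linear operator K : E → F with ‖K‖ < ε and ‖T‖ < ‖T + K‖; consequently T + K is norm attaining, so the norm attaining operators are dense in L(E, F). -/

import Mathlib

open Filter Topology

lemma exists_unit_lt_apply {𝕜 E F : Type*} [RCLike 𝕜]
    [NormedAddCommGroup E] [NormedSpace 𝕜 E]
    [NormedAddCommGroup F] [NormedSpace 𝕜 F]
    (S : E →L[𝕜] F) {r : ℝ} (hr0 : 0 ≤ r) (hr : r < ‖S‖) :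
    ∃ x : E, ‖x‖ = 1 ∧ r < ‖S x‖ := by
  obtain ⟨x, hx1, hSx⟩ := S.exists_lt_apply_of_lt_opNorm hr
  have hx0 : x ≠ 0 := by
    rintro rfl
    simp only [map_zero, norm_zero] at hSx
    exact absurd hSx (not_lt.2 hr0)
  have hxn : (0:ℝ) < ‖x‖ := norm_pos_iff.2 hx0
  refine ⟨(‖x‖⁻¹ : 𝕜) • x, ?_, ?_⟩
  · rw [norm_smul, norm_inv, RCLike.norm_ofReal, abs_of_pos hxn, inv_mul_cancel₀ hxn.ne']
  · rw [map_smul, norm_smul, norm_inv, RCLike.norm_ofReal, abs_of_pos hxn]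
    calc r < ‖S x‖ := hSx
    _ ≤ ‖x‖⁻¹ * ‖S x‖ := by
        refine le_mul_of_one_le_left (norm_nonneg _) ?_
        rw [one_le_inv_iff₀]
        exact ⟨hxn, hx1.le⟩

/-- a maximizing sequence of unit vectors exists whenever `‖S‖ > 0`. -/
lemma exists_maximizing_seq {𝕜 E F : Type*} [RCLike 𝕜]
    [NormedAddCommGroup E] [NormedSpace 𝕜 E]
    [NormedAddCommGroup F] [NormedSpace 𝕜 F]
    (S : E →L[𝕜] F) (hS : 0 < ‖S‖) :
    ∃ x : ℕ → E, (∀ n, ‖x n‖ = 1) ∧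
      Tendsto (fun n => ‖S (x n)‖) atTop (𝓝 ‖S‖) := by
  have h : ∀ n : ℕ, ∃ z : E, ‖z‖ = 1 ∧ max 0 (‖S‖ - 1 / (n + 1)) < ‖S z‖ := by
    intro n
    refine exists_unit_lt_apply S (le_max_left _ _) (max_lt hS ?_)
    have : (0:ℝ) < 1 / (n + 1) := by positivity
    linarith
  choose x hx1 hx2 using h
  refine ⟨x, hx1, ?_⟩
  have hlow : Tendsto (fun n : ℕ => max 0 (‖S‖ - 1 / (n + 1))) atTop (𝓝 ‖S‖) := by
    have h1 : Tendsto (fun n : ℕ => ‖S‖ - 1 / (n + 1)) atTop (𝓝 (‖S‖ - 0)) :=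
      tendsto_const_nhds.sub tendsto_one_div_add_atTop_nhds_zero_nat
    have := (tendsto_const_nhds : Tendsto (fun _ : ℕ => (0:ℝ)) atTop (𝓝 0)).max h1
    simpa [max_eq_right hS.le] using this
  refine tendsto_of_tendsto_of_tendsto_of_le_of_le hlow tendsto_const_nhds
    (fun n => (hx2 n).le) (fun n => ?_)
  calc ‖S (x n)‖ ≤ ‖S‖ * ‖x n‖ := S.le_opNorm _
  _ = ‖S‖ := by rw [hx1 n, mul_one]

/-- if `(E, F)` has the weak maximizing property and `F ≠ {0}`, then for
every bounded `T : E → F` and `ε > 0` there is a rank-one operator `K` with `‖K‖ < ε`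
and `‖T‖ < ‖T + K‖`; consequently `T + K` attains its norm. -/
theorem rank_one_perturbation_dense {𝕜 E F : Type*} [RCLike 𝕜]
    [NormedAddCommGroup E] [NormedSpace 𝕜 E] [CompleteSpace E] [Nontrivial E]
    [NormedAddCommGroup F] [NormedSpace 𝕜 F] [CompleteSpace F] [Nontrivial F]
    (hWMP : ∀ S : E →L[𝕜] F,
      (∃ x : ℕ → E, (∀ n, ‖x n‖ = 1) ∧
        Tendsto (fun n => ‖S (x n)‖) atTop (𝓝 ‖S‖) ∧
        ¬ ∀ f : E →L[𝕜] 𝕜, Tendsto (fun n => f (x n)) atTop (𝓝 0)) →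
      ∃ x₀, ‖x₀‖ = 1 ∧ ‖S x₀‖ = ‖S‖) :
    ∀ (T : E →L[𝕜] F) (ε : ℝ), 0 < ε →
      ∃ K : E →L[𝕜] F,
        (∃ (φ : E →L[𝕜] 𝕜) (y : F), φ ≠ 0 ∧ y ≠ 0 ∧ ∀ x, K x = φ x • y) ∧
        ‖K‖ < ε ∧ ‖T‖ < ‖T + K‖ ∧
        ∃ x₀, ‖x₀‖ = 1 ∧ ‖(T + K) x₀‖ = ‖T + K‖ := by
  intro T ε hε
  by_cases hT : T = 0
  · -- trivial case: `T = 0`; take `K = (ε/2) φ(·) y₀`.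
    subst hT
    obtain ⟨e, he⟩ := exists_ne (0 : E)
    obtain ⟨y₁, hy₁⟩ := exists_ne (0 : F)
    set x₁ : E := (‖e‖⁻¹ : 𝕜) • e with hx₁def
    have hex : (0:ℝ) < ‖e‖ := norm_pos_iff.2 he
    have hx₁ : ‖x₁‖ = 1 := by
      rw [hx₁def, norm_smul, norm_inv, RCLike.norm_ofReal, abs_of_pos hex,
        inv_mul_cancel₀ hex.ne']
    obtain ⟨φ, hφ1, hφx⟩ := exists_dual_vector 𝕜 x₁ (by
      intro h; rw [h] at hx₁; norm_num at hx₁)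
    have hφx1 : φ x₁ = 1 := by rw [hφx, hx₁]; norm_num
    have hy₁n : (0:ℝ) < ‖y₁‖ := norm_pos_iff.2 hy₁
    set y : F := ((ε / 2 * ‖y₁‖⁻¹ : ℝ) : 𝕜) • y₁ with hydef
    have hyn : ‖y‖ = ε / 2 := by
      rw [hydef, norm_smul, RCLike.norm_ofReal, abs_of_pos (by positivity),
        mul_assoc, inv_mul_cancel₀ hy₁n.ne', mul_one]
    have hy0 : y ≠ 0 := by
      intro h; rw [h, norm_zero] at hyn; linarith
    refine ⟨φ.smulRight y, ⟨φ, y, ?_, hy0, fun x => rfl⟩, ?_, ?_, ⟨x₁, hx₁, ?_⟩⟩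
    · intro h
      have := hφx1
      rw [h] at this
      simp at this
    · rw [ContinuousLinearMap.norm_smulRight_apply, hφ1, one_mul, hyn]
      linarith
    · have h1 : ‖(0 + φ.smulRight y) x₁‖ = ε / 2 := by
        simp [hφx1, hyn]
      have : ε / 2 ≤ ‖(0:E →L[𝕜] F) + φ.smulRight y‖ := by
        calc ε / 2 = ‖(0 + φ.smulRight y) x₁‖ := h1.symm
        _ ≤ ‖(0:E →L[𝕜] F) + φ.smulRight y‖ * ‖x₁‖ := ContinuousLinearMap.le_opNorm _ _
        _ = _ := by rw [hx₁, mul_one]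
      simpa using lt_of_lt_of_le (by linarith : (0:ℝ) < ε / 2) this
    · have hub : ‖(0:E →L[𝕜] F) + φ.smulRight y‖ ≤ ε / 2 := by
        rw [zero_add, ContinuousLinearMap.norm_smulRight_apply, hφ1, one_mul, hyn]
      have h1 : ‖(0 + φ.smulRight y) x₁‖ = ε / 2 := by simp [hφx1, hyn]
      refine le_antisymm ?_ (by rw [h1]; exact hub)
      calc ‖(0 + φ.smulRight y) x₁‖ ≤ ‖(0:E →L[𝕜] F) + φ.smulRight y‖ * ‖x₁‖ :=
            ContinuousLinearMap.le_opNorm _ _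
      _ = ‖(0:E →L[𝕜] F) + φ.smulRight y‖ := by rw [hx₁, mul_one]
  · -- main case: `T ≠ 0`.
    have hTn : (0:ℝ) < ‖T‖ := norm_pos_iff.2 hT
    set c : ℝ := ε / (2 * ‖T‖ + 1) with hcdef
    have hc : 0 < c := by positivity
    have hcT : c * ‖T‖ < ε := by
      rw [hcdef, div_mul_eq_mul_div, div_lt_iff₀ (by positivity)]
      nlinarith
    -- choose a unit vector `x₁` with `‖T x₁‖ > ‖T‖ / (1 + c)`
    obtain ⟨x₁, hx₁, hTx₁⟩ := exists_unit_lt_apply T (r := ‖T‖ / (1 + c))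
      (by positivity) (by rw [div_lt_iff₀ (by linarith)]; nlinarith)
    have hTx₁0 : T x₁ ≠ 0 := by
      intro h
      rw [h, norm_zero] at hTx₁
      exact absurd hTx₁ (not_lt.2 (by positivity))
    obtain ⟨φ, hφ1, hφx⟩ := exists_dual_vector 𝕜 x₁ (by
      intro h; rw [h] at hx₁; norm_num at hx₁)
    have hφx1 : φ x₁ = 1 := by rw [hφx, hx₁]; norm_num
    set y : F := (c : 𝕜) • T x₁ with hydef
    have hy0 : y ≠ 0 := by
      rw [hydef]
      exact smul_ne_zero (by exact_mod_cast hc.ne') hTx₁0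
    set K : E →L[𝕜] F := φ.smulRight y with hKdef
    have hKnorm : ‖K‖ = c * ‖T x₁‖ := by
      rw [hKdef, ContinuousLinearMap.norm_smulRight_apply, hφ1, one_mul, hydef,
        norm_smul, RCLike.norm_ofReal, abs_of_pos hc]
    have hKlt : ‖K‖ < ε := by
      rw [hKnorm]
      calc c * ‖T x₁‖ ≤ c * ‖T‖ := by
            have := T.le_opNorm x₁
            rw [hx₁, mul_one] at this
            nlinarith
      _ < ε := hcT
    have hSx₁ : (T + K) x₁ = ((1 + c : ℝ) : 𝕜) • T x₁ := by
      simp only [ContinuousLinearMap.add_apply, hKdef, ContinuousLinearMap.smulRight_apply,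
        hφx1, one_smul, hydef]
      push_cast
      rw [add_smul, one_smul]
    have hTlt : ‖T‖ < ‖T + K‖ := by
      have h1 : ‖(T + K) x₁‖ = (1 + c) * ‖T x₁‖ := by
        rw [hSx₁, norm_smul, RCLike.norm_ofReal, abs_of_pos (by linarith)]
      have h2 : ‖T‖ < (1 + c) * ‖T x₁‖ := by
        rw [div_lt_iff₀ (by linarith)] at hTx₁
        nlinarith
      calc ‖T‖ < ‖(T + K) x₁‖ := by rw [h1]; exact h2
      _ ≤ ‖T + K‖ * ‖x₁‖ := ContinuousLinearMap.le_opNorm _ _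
      _ = ‖T + K‖ := by rw [hx₁, mul_one]
    refine ⟨K, ⟨φ, y, ?_, hy0, fun x => rfl⟩, hKlt, hTlt, ?_⟩
    · intro h
      have := hφx1
      rw [h] at this
      simp at this
    · -- apply the weak maximizing property to `S = T + K`
      obtain ⟨x, hxn, hxmax⟩ := exists_maximizing_seq (T + K) (lt_of_le_of_lt (norm_nonneg T) hTlt)
      refine hWMP (T + K) ⟨x, hxn, hxmax, ?_⟩
      intro hweak
      have hφ0 : Tendsto (fun n => φ (x n)) atTop (𝓝 0) := hweak φ
      have hK0 : Tendsto (fun n => ‖K (x n)‖) atTop (𝓝 0) := by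
        have hn : Tendsto (fun n => ‖φ (x n)‖) atTop (𝓝 0) := by
          simpa using hφ0.norm
        have : Tendsto (fun n => ‖φ (x n)‖ * ‖y‖) atTop (𝓝 (0 * ‖y‖)) := hn.mul_const _
        rw [zero_mul] at this
        refine this.congr fun n => ?_
        rw [hKdef]
        simp [norm_smul]
      have hub : Tendsto (fun n => ‖T‖ + ‖K (x n)‖) atTop (𝓝 (‖T‖ + 0)) :=
        tendsto_const_nhds.add hK0
      rw [add_zero] at hub
      have hle : ‖T + K‖ ≤ ‖T‖ :=
        le_of_tendsto_of_tendsto' hxmax hub fun n => by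
          calc ‖(T + K) (x n)‖ ≤ ‖T (x n)‖ + ‖K (x n)‖ := by
                rw [ContinuousLinearMap.add_apply]; exact norm_add_le _ _
          _ ≤ ‖T‖ + ‖K (x n)‖ := by
                have := T.le_opNorm (x n)
                rw [hxn n, mul_one] at this
                linarith
      exact absurd hTlt (not_lt.2 hle)
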